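/- Let m ∈ (0,4] and α > 0, and let f be a four-times continuously differentiable positive solution of the self-similar profile equation α·(f − y f') + m f^{m−1} f' f''' + f^m f'''' = 0 on an open interval I ⊆ (0,∞). Define E₂(y) := −(α/(2y))·( f(y) − y·f'(y) )² + f(y)^m · f''(y) · f'''(y). Then E₂ is differentiable on I with E₂'(y) = (α/(2y²))·( f(y) − y·f'(y) )² + f(y)^m·f'''(y)² for all y ∈ I. Moreover, if f is a positive four-times continuously differentiable solution on [0, Y) (Y > 0) with initial conditions f(0) = 1, f'(0) = 0, f''(0) = κ, f'''(0) = 0, then E₂(y) → −∞ as y → 0⁺. -/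

import Mathlib

open Set Filter Topology MeasureTheory

noncomputable section

/-- `f` is four-times continuously differentiable on `s`, with successive
derivatives `f1`, `f2`, `f3`, `f4`. -/
def C4On (s : Set ℝ) (f f1 f2 f3 f4 : ℝ → ℝ) : Prop :=
  (∀ y ∈ s, HasDerivWithinAt f (f1 y) s y) ∧
  (∀ y ∈ s, HasDerivWithinAt f1 (f2 y) s y) ∧
  (∀ y ∈ s, HasDerivWithinAt f2 (f3 y) s y) ∧
  (∀ y ∈ s, HasDerivWithinAt f3 (f4 y) s y) ∧
  ContinuousOn f4 s

/-- The self-similar profile ODE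
`α (f − y f') + m f^(m−1) f' f''' + f^m f'''' = 0` on the set `s`,
for a function `f` with successive derivatives `f1`, `f3`, `f4`. -/
def ProfileODE (m α : ℝ) (s : Set ℝ) (f f1 f3 f4 : ℝ → ℝ) : Prop :=
  ∀ y ∈ s,
    α * (f y - y * f1 y) + m * f y ^ (m - 1) * f1 y * f3 y + f y ^ m * f4 y = 0

set_option maxHeartbeats 1000000 in
theorem stmt11 (m α : ℝ) (hm0 : 0 < m) (hm4 : m ≤ 4) (hα : 0 < α)
    (I : Set ℝ) (hI : IsOpen I) (hIsub : I ⊆ Ioi 0)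
    (f f1 f2 f3 f4 : ℝ → ℝ)
    (hd1 : ∀ y ∈ I, HasDerivAt f (f1 y) y)
    (hd2 : ∀ y ∈ I, HasDerivAt f1 (f2 y) y)
    (hd3 : ∀ y ∈ I, HasDerivAt f2 (f3 y) y)
    (hd4 : ∀ y ∈ I, HasDerivAt f3 (f4 y) y)
    (hc : ContinuousOn f4 I)
    (hpos : ∀ y ∈ I, 0 < f y)
    (hODE : ProfileODE m α I f f1 f3 f4) :
    -- E₂ is differentiable with E₂' = (α/(2y²)) (f − y f')² + f^m f'''²
    (∀ y ∈ I, HasDerivAt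
      (fun y => -(α / (2 * y)) * (f y - y * f1 y) ^ 2 + f y ^ m * f2 y * f3 y)
      (α / (2 * y ^ 2) * (f y - y * f1 y) ^ 2 + f y ^ m * f3 y ^ 2) y) ∧
    -- moreover, for solutions on [0, Y) with the initial conditions:
    (∀ (Y κ : ℝ) (g g1 g2 g3 g4 : ℝ → ℝ), 0 < Y →
      C4On (Ico 0 Y) g g1 g2 g3 g4 →
      (∀ y ∈ Ico (0 : ℝ) Y, 0 < g y) →
      ProfileODE m α (Ioo 0 Y) g g1 g3 g4 →
      g 0 = 1 → g1 0 = 0 → g2 0 = κ → g3 0 = 0 →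
      Tendsto (fun y => -(α / (2 * y)) * (g y - y * g1 y) ^ 2 + g y ^ m * g2 y * g3 y)
        (𝓝[>] 0) atBot) := by
  constructor
  · intro y hy
    have hy0 : (0:ℝ) < y := hIsub hy
    have hfy : f y ≠ 0 := (hpos y hy).ne'
    have hu : HasDerivAt (fun y => f y - y * f1 y) (-(y * f2 y)) y := by
      have h := (hd1 y hy).sub ((hasDerivAt_id y).mul (hd2 y hy))
      refine h.congr_deriv (Eq.symm ?_)
      simp only [id_eq]
      ring
    have hc1 : HasDerivAt (fun y : ℝ => -(α / (2 * y))) (α / (2 * y ^ 2)) y := by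
      have h2y : HasDerivAt (fun y : ℝ => 2 * y) 2 y := by
        simpa using (hasDerivAt_id y).const_mul 2
      have h := ((hasDerivAt_const y α).div h2y (by positivity)).neg
      refine h.congr_deriv (Eq.symm ?_)
      field_simp
      ring
    have hA : HasDerivAt (fun y => -(α / (2 * y)) * (f y - y * f1 y) ^ 2)
        (α / (2 * y ^ 2) * (f y - y * f1 y) ^ 2
          + α * (f y - y * f1 y) * f2 y) y := by
      have h := hc1.mul (hu.pow 2)
      refine h.congr_deriv (Eq.symm ?_)
      simp only [Pi.pow_apply]
      field_simp
      ring
    have hr : HasDerivAt (fun y => f y ^ m) (f1 y * m * f y ^ (m - 1)) y :=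
      (hd1 y hy).rpow_const (Or.inl hfy)
    have hB : HasDerivAt (fun y => f y ^ m * f2 y * f3 y)
        ((f1 y * m * f y ^ (m - 1)) * f2 y * f3 y + f y ^ m * f3 y * f3 y
          + f y ^ m * f2 y * f4 y) y := by
      have h := (hr.mul (hd3 y hy)).mul (hd4 y hy)
      refine h.congr_deriv (Eq.symm ?_)
      simp only [Pi.mul_apply]
      ring
    have h := hA.add hB
    refine h.congr_deriv (Eq.symm ?_)
    have hODE' := hODE y hy
    linear_combination (-(f2 y)) * hODE'
  · intro Y κ g g1 g2 g3 g4 hY hC4 hgpos hODEg hg0 hg10 hg20 hg30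
    obtain ⟨hg, hg1, hg2, hg3, _⟩ := hC4
    have h0mem : (0:ℝ) ∈ Ico 0 Y := ⟨le_refl _, hY⟩
    have hmono : 𝓝[>] (0:ℝ) ≤ 𝓝[Ico 0 Y] 0 := by
      rw [← nhdsWithin_Ioo_eq_nhdsGT hY]
      exact nhdsWithin_mono _ Ioo_subset_Ico_self
    have lim_g : Tendsto g (𝓝[>] 0) (𝓝 1) := by
      have := (hg 0 h0mem).continuousWithinAt
      rw [ContinuousWithinAt, hg0] at this
      exact this.mono_left hmono
    have lim_g1 : Tendsto g1 (𝓝[>] 0) (𝓝 0) := by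
      have := (hg1 0 h0mem).continuousWithinAt
      rw [ContinuousWithinAt, hg10] at this
      exact this.mono_left hmono
    have lim_g2 : Tendsto g2 (𝓝[>] 0) (𝓝 κ) := by
      have := (hg2 0 h0mem).continuousWithinAt
      rw [ContinuousWithinAt, hg20] at this
      exact this.mono_left hmono
    have lim_g3 : Tendsto g3 (𝓝[>] 0) (𝓝 0) := by
      have := (hg3 0 h0mem).continuousWithinAt
      rw [ContinuousWithinAt, hg30] at this
      exact this.mono_left hmono
    have lim_y : Tendsto (fun y : ℝ => y) (𝓝[>] (0:ℝ)) (𝓝 0) :=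
      tendsto_id.mono_left nhdsWithin_le_nhds
    have lim_u2 : Tendsto (fun y => (g y - y * g1 y) ^ 2) (𝓝[>] 0) (𝓝 1) := by
      have h := (lim_g.sub (lim_y.mul lim_g1)).pow 2
      simpa using h
    have lim_inv : Tendsto (fun y : ℝ => α / (2 * y)) (𝓝[>] (0:ℝ)) atTop := by
      have h2 : Tendsto (fun y : ℝ => 2 * y) (𝓝[>] (0:ℝ)) (𝓝[>] (0:ℝ)) := by
        apply tendsto_nhdsWithin_of_tendsto_nhds_of_eventually_within
        · have h0 : Tendsto (fun y : ℝ => 2 * y) (𝓝 (0:ℝ)) (𝓝 (2 * 0)) :=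
            tendsto_id.const_mul 2
          simpa using h0.mono_left nhdsWithin_le_nhds
        · filter_upwards [self_mem_nhdsWithin] with y hy
          exact mul_pos two_pos (show (0:ℝ) < y from hy)
      have h3 : Tendsto (fun y : ℝ => α * (2 * y)⁻¹) (𝓝[>] (0:ℝ)) atTop :=
        (tendsto_inv_nhdsGT_zero.comp h2).const_mul_atTop hα
      have he : (fun y : ℝ => α * (2 * y)⁻¹) = fun y : ℝ => α / (2 * y) := by
        funext y; rw [div_eq_mul_inv]
      rwa [he] at h3
    have lim_first : Tendsto (fun y => -(α / (2 * y)) * (g y - y * g1 y) ^ 2)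
        (𝓝[>] (0:ℝ)) atBot := by
      have h := tendsto_neg_atTop_atBot.comp (lim_inv.atTop_mul_pos zero_lt_one lim_u2)
      simpa [Function.comp_def, neg_mul] using h
    have lim_second : Tendsto (fun y => g y ^ m * g2 y * g3 y) (𝓝[>] (0:ℝ)) (𝓝 0) := by
      have hgm : Tendsto (fun y => g y ^ m) (𝓝[>] (0:ℝ)) (𝓝 1) := by
        have := lim_g.rpow_const (p := m) (Or.inr hm0.le)
        simpa using this
      have h := (hgm.mul lim_g2).mul lim_g3
      simpa using h
    exact lim_first.atBot_add lim_second
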